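/- The form f = (xy + xz + yz)² + w⁴ + Q₁(x,y,z,w), where Q₁ is the Choi–Lam form, is not a sum of squares of real quadratic forms in four variables. -/

import Mathlib

open MvPolynomial

noncomputable section SOSAux

namespace SOSAux

/-- Monomial exponent vectors on four variables, given by their four values. -/
def m4 (a b c d : ℕ) : Fin 4 →₀ ℕ := Finsupp.equivFunOnFinite.symm ![a, b, c, d]

@[simp] lemma m4_apply_0 (a b c d : ℕ) : m4 a b c d 0 = a := rfl
@[simp] lemma m4_apply_1 (a b c d : ℕ) : m4 a b c d 1 = b := rfl
@[simp] lemma m4_apply_2 (a b c d : ℕ) : m4 a b c d 2 = c := rfl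
@[simp] lemma m4_apply_3 (a b c d : ℕ) : m4 a b c d 3 = d := rfl

lemma fs_eq (x : Fin 4 →₀ ℕ) {a b c d : ℕ} (h0 : x 0 = a) (h1 : x 1 = b)
    (h2 : x 2 = c) (h3 : x 3 = d) : x = m4 a b c d := by
  ext j; fin_cases j <;> simpa

@[simp] lemma m4_inj {a b c d a' b' c' d' : ℕ} :
    m4 a b c d = m4 a' b' c' d' ↔ a = a' ∧ b = b' ∧ c = c' ∧ d = d' := by
  constructor
  · intro h
    exact ⟨congrArg (fun f => f 0) h, congrArg (fun f => f 1) h,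
      congrArg (fun f => f 2) h, congrArg (fun f => f 3) h⟩
  · rintro ⟨rfl, rfl, rfl, rfl⟩; rfl

lemma m4_add (a b c d a' b' c' d' : ℕ) :
    m4 a b c d + m4 a' b' c' d' = m4 (a + a') (b + b') (c + c') (d + d') := by
  ext j; fin_cases j <;> simp

lemma deg4 (c : Fin 4 →₀ ℕ) : c.degree = c 0 + c 1 + c 2 + c 3 := by
  rw [Finsupp.degree_apply]
  rw [Finset.sum_subset (Finset.subset_univ _)
    (by intro x _ hx; simpa using Finsupp.notMem_support_iff.mp hx)]
  simp [Fin.sum_univ_four]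

lemma mono4 (a b c d : ℕ) (r : ℝ) :
    (monomial (m4 a b c d) r : MvPolynomial (Fin 4) ℝ)
      = C r * X 0 ^ a * X 1 ^ b * X 2 ^ c * X 3 ^ d := by
  have h : m4 a b c d = Finsupp.single 0 a + Finsupp.single 1 b
      + Finsupp.single 2 c + Finsupp.single 3 d := by
    ext j; fin_cases j <;> simp [Finsupp.single_apply]
  rw [h, monomial_add_single, monomial_add_single, monomial_add_single,
    monomial_eq, Finsupp.prod_single_index]
  simp

abbrev R4 := MvPolynomial (Fin 4) ℝ

lemma coeff_sq_eq (g : R4) (hg : g.IsHomogeneous 2) (μ : Fin 4 →₀ ℕ)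
    (T : Finset ((Fin 4 →₀ ℕ) × (Fin 4 →₀ ℕ))) (hT : T ⊆ Finset.HasAntidiagonal.antidiagonal μ)
    (hout : ∀ x ∈ Finset.HasAntidiagonal.antidiagonal μ, x ∉ T → x.1.degree = 2 → x.2.degree = 2 → False) :
    coeff μ (g ^ 2) = ∑ x ∈ T, coeff x.1 g * coeff x.2 g := by
  rw [sq, coeff_mul]
  refine (Finset.sum_subset hT ?_).symm
  intro x hx hx'
  by_cases h1 : x.1.degree = 2
  · by_cases h2 : x.2.degree = 2
    · exact absurd (hout x hx hx' h1 h2) not_false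
    · rw [hg.coeff_eq_zero h2, mul_zero]
  · rw [hg.coeff_eq_zero h1, zero_mul]

lemma sq_x4 (g : R4) (hg : g.IsHomogeneous 2) :
    coeff (m4 4 0 0 0) (g ^ 2) = (coeff (m4 2 0 0 0) g) ^ 2 := by
  rw [coeff_sq_eq g hg _ {(m4 2 0 0 0, m4 2 0 0 0)} ?_ ?_]
  · simp [sq]
  · intro x hx
    simp only [Finset.mem_singleton] at hx
    subst hx
    simp [Finset.HasAntidiagonal.mem_antidiagonal, m4_add]
  · intro x hx hxT h1 h2
    rw [Finset.HasAntidiagonal.mem_antidiagonal] at hx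
    have e0 : x.1 0 + x.2 0 = 4 := by have := congrArg (fun f => f 0) hx; simpa using this
    have e1 : x.1 1 + x.2 1 = 0 := by have := congrArg (fun f => f 1) hx; simpa using this
    have e2 : x.1 2 + x.2 2 = 0 := by have := congrArg (fun f => f 2) hx; simpa using this
    have e3 : x.1 3 + x.2 3 = 0 := by have := congrArg (fun f => f 3) hx; simpa using this
    rw [deg4] at h1 h2
    exact hxT (by
      simp only [Finset.mem_singleton]
      exact Prod.ext
        (fs_eq _ (by omega) (by omega) (by omega) (by omega))
        (fs_eq _ (by omega) (by omega) (by omega) (by omega)))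

lemma sq_y4 (g : R4) (hg : g.IsHomogeneous 2) :
    coeff (m4 0 4 0 0) (g ^ 2) = (coeff (m4 0 2 0 0) g) ^ 2 := by
  rw [coeff_sq_eq g hg _ {(m4 0 2 0 0, m4 0 2 0 0)} ?_ ?_]
  · simp [sq]
  · intro x hx
    simp only [Finset.mem_singleton] at hx
    subst hx
    simp [Finset.HasAntidiagonal.mem_antidiagonal, m4_add]
  · intro x hx hxT h1 h2
    rw [Finset.HasAntidiagonal.mem_antidiagonal] at hx
    have e0 : x.1 0 + x.2 0 = 0 := by have := congrArg (fun f => f 0) hx; simpa using this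
    have e1 : x.1 1 + x.2 1 = 4 := by have := congrArg (fun f => f 1) hx; simpa using this
    have e2 : x.1 2 + x.2 2 = 0 := by have := congrArg (fun f => f 2) hx; simpa using this
    have e3 : x.1 3 + x.2 3 = 0 := by have := congrArg (fun f => f 3) hx; simpa using this
    rw [deg4] at h1 h2
    exact hxT (by
      simp only [Finset.mem_singleton]
      exact Prod.ext
        (fs_eq _ (by omega) (by omega) (by omega) (by omega))
        (fs_eq _ (by omega) (by omega) (by omega) (by omega)))

lemma sq_z4 (g : R4) (hg : g.IsHomogeneous 2) :
    coeff (m4 0 0 4 0) (g ^ 2) = (coeff (m4 0 0 2 0) g) ^ 2 := by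
  rw [coeff_sq_eq g hg _ {(m4 0 0 2 0, m4 0 0 2 0)} ?_ ?_]
  · simp [sq]
  · intro x hx
    simp only [Finset.mem_singleton] at hx
    subst hx
    simp [Finset.HasAntidiagonal.mem_antidiagonal, m4_add]
  · intro x hx hxT h1 h2
    rw [Finset.HasAntidiagonal.mem_antidiagonal] at hx
    have e0 : x.1 0 + x.2 0 = 0 := by have := congrArg (fun f => f 0) hx; simpa using this
    have e1 : x.1 1 + x.2 1 = 0 := by have := congrArg (fun f => f 1) hx; simpa using this
    have e2 : x.1 2 + x.2 2 = 4 := by have := congrArg (fun f => f 2) hx; simpa using this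
    have e3 : x.1 3 + x.2 3 = 0 := by have := congrArg (fun f => f 3) hx; simpa using this
    rw [deg4] at h1 h2
    exact hxT (by
      simp only [Finset.mem_singleton]
      exact Prod.ext
        (fs_eq _ (by omega) (by omega) (by omega) (by omega))
        (fs_eq _ (by omega) (by omega) (by omega) (by omega)))

lemma sq_xw (g : R4) (hg : g.IsHomogeneous 2) :
    coeff (m4 2 0 0 2) (g ^ 2) =
      2 * (coeff (m4 2 0 0 0) g * coeff (m4 0 0 0 2) g) + (coeff (m4 1 0 0 1) g) ^ 2 := by
  rw [coeff_sq_eq g hg _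
    {(m4 2 0 0 0, m4 0 0 0 2), (m4 1 0 0 1, m4 1 0 0 1), (m4 0 0 0 2, m4 2 0 0 0)} ?_ ?_]
  · rw [Finset.sum_insert (by simp), Finset.sum_insert (by simp), Finset.sum_singleton]
    ring
  · intro x hx
    simp only [Finset.mem_insert, Finset.mem_singleton] at hx
    rcases hx with rfl | rfl | rfl <;> simp [Finset.HasAntidiagonal.mem_antidiagonal, m4_add]
  · intro x hx hxT h1 h2
    rw [Finset.HasAntidiagonal.mem_antidiagonal] at hx
    have e0 : x.1 0 + x.2 0 = 2 := by have := congrArg (fun f => f 0) hx; simpa using this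
    have e1 : x.1 1 + x.2 1 = 0 := by have := congrArg (fun f => f 1) hx; simpa using this
    have e2 : x.1 2 + x.2 2 = 0 := by have := congrArg (fun f => f 2) hx; simpa using this
    have e3 : x.1 3 + x.2 3 = 2 := by have := congrArg (fun f => f 3) hx; simpa using this
    rw [deg4] at h1 h2
    apply hxT
    simp only [Finset.mem_insert, Finset.mem_singleton]
    rcases (by omega : (x.1 0 = 2 ∧ x.1 3 = 0) ∨ (x.1 0 = 1 ∧ x.1 3 = 1)
        ∨ (x.1 0 = 0 ∧ x.1 3 = 2)) with h | h | h
    · exact Or.inl (Prod.ext (fs_eq _ (by omega) (by omega) (by omega) (by omega))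
        (fs_eq _ (by omega) (by omega) (by omega) (by omega)))
    · exact Or.inr (Or.inl (Prod.ext (fs_eq _ (by omega) (by omega) (by omega) (by omega))
        (fs_eq _ (by omega) (by omega) (by omega) (by omega))))
    · exact Or.inr (Or.inr (Prod.ext (fs_eq _ (by omega) (by omega) (by omega) (by omega))
        (fs_eq _ (by omega) (by omega) (by omega) (by omega))))

lemma sq_yw (g : R4) (hg : g.IsHomogeneous 2) :
    coeff (m4 0 2 0 2) (g ^ 2) =
      2 * (coeff (m4 0 2 0 0) g * coeff (m4 0 0 0 2) g) + (coeff (m4 0 1 0 1) g) ^ 2 := by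
  rw [coeff_sq_eq g hg _
    {(m4 0 2 0 0, m4 0 0 0 2), (m4 0 1 0 1, m4 0 1 0 1), (m4 0 0 0 2, m4 0 2 0 0)} ?_ ?_]
  · rw [Finset.sum_insert (by simp), Finset.sum_insert (by simp), Finset.sum_singleton]
    ring
  · intro x hx
    simp only [Finset.mem_insert, Finset.mem_singleton] at hx
    rcases hx with rfl | rfl | rfl <;> simp [Finset.HasAntidiagonal.mem_antidiagonal, m4_add]
  · intro x hx hxT h1 h2
    rw [Finset.HasAntidiagonal.mem_antidiagonal] at hx
    have e0 : x.1 0 + x.2 0 = 0 := by have := congrArg (fun f => f 0) hx; simpa using this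
    have e1 : x.1 1 + x.2 1 = 2 := by have := congrArg (fun f => f 1) hx; simpa using this
    have e2 : x.1 2 + x.2 2 = 0 := by have := congrArg (fun f => f 2) hx; simpa using this
    have e3 : x.1 3 + x.2 3 = 2 := by have := congrArg (fun f => f 3) hx; simpa using this
    rw [deg4] at h1 h2
    apply hxT
    simp only [Finset.mem_insert, Finset.mem_singleton]
    rcases (by omega : (x.1 1 = 2 ∧ x.1 3 = 0) ∨ (x.1 1 = 1 ∧ x.1 3 = 1)
        ∨ (x.1 1 = 0 ∧ x.1 3 = 2)) with h | h | h
    · exact Or.inl (Prod.ext (fs_eq _ (by omega) (by omega) (by omega) (by omega))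
        (fs_eq _ (by omega) (by omega) (by omega) (by omega)))
    · exact Or.inr (Or.inl (Prod.ext (fs_eq _ (by omega) (by omega) (by omega) (by omega))
        (fs_eq _ (by omega) (by omega) (by omega) (by omega))))
    · exact Or.inr (Or.inr (Prod.ext (fs_eq _ (by omega) (by omega) (by omega) (by omega))
        (fs_eq _ (by omega) (by omega) (by omega) (by omega))))

lemma sq_zw (g : R4) (hg : g.IsHomogeneous 2) :
    coeff (m4 0 0 2 2) (g ^ 2) =
      2 * (coeff (m4 0 0 2 0) g * coeff (m4 0 0 0 2) g) + (coeff (m4 0 0 1 1) g) ^ 2 := by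
  rw [coeff_sq_eq g hg _
    {(m4 0 0 2 0, m4 0 0 0 2), (m4 0 0 1 1, m4 0 0 1 1), (m4 0 0 0 2, m4 0 0 2 0)} ?_ ?_]
  · rw [Finset.sum_insert (by simp), Finset.sum_insert (by simp), Finset.sum_singleton]
    ring
  · intro x hx
    simp only [Finset.mem_insert, Finset.mem_singleton] at hx
    rcases hx with rfl | rfl | rfl <;> simp [Finset.HasAntidiagonal.mem_antidiagonal, m4_add]
  · intro x hx hxT h1 h2
    rw [Finset.HasAntidiagonal.mem_antidiagonal] at hx
    have e0 : x.1 0 + x.2 0 = 0 := by have := congrArg (fun f => f 0) hx; simpa using this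
    have e1 : x.1 1 + x.2 1 = 0 := by have := congrArg (fun f => f 1) hx; simpa using this
    have e2 : x.1 2 + x.2 2 = 2 := by have := congrArg (fun f => f 2) hx; simpa using this
    have e3 : x.1 3 + x.2 3 = 2 := by have := congrArg (fun f => f 3) hx; simpa using this
    rw [deg4] at h1 h2
    apply hxT
    simp only [Finset.mem_insert, Finset.mem_singleton]
    rcases (by omega : (x.1 2 = 2 ∧ x.1 3 = 0) ∨ (x.1 2 = 1 ∧ x.1 3 = 1)
        ∨ (x.1 2 = 0 ∧ x.1 3 = 2)) with h | h | h
    · exact Or.inl (Prod.ext (fs_eq _ (by omega) (by omega) (by omega) (by omega))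
        (fs_eq _ (by omega) (by omega) (by omega) (by omega)))
    · exact Or.inr (Or.inl (Prod.ext (fs_eq _ (by omega) (by omega) (by omega) (by omega))
        (fs_eq _ (by omega) (by omega) (by omega) (by omega))))
    · exact Or.inr (Or.inr (Prod.ext (fs_eq _ (by omega) (by omega) (by omega) (by omega))
        (fs_eq _ (by omega) (by omega) (by omega) (by omega))))

lemma nat6 (a0 a1 a2 a3 b0 b1 b2 b3 : ℕ) (e0 : a0 + b0 = 1) (e1 : a1 + b1 = 1)
    (e2 : a2 + b2 = 1) (e3 : a3 + b3 = 1)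
    (h1 : a0 + a1 + a2 + a3 = 2) (h2 : b0 + b1 + b2 + b3 = 2) :
    (a0 = 1 ∧ a1 = 0 ∧ a2 = 0 ∧ a3 = 1) ∨
    (a0 = 0 ∧ a1 = 1 ∧ a2 = 0 ∧ a3 = 1) ∨
    (a0 = 0 ∧ a1 = 0 ∧ a2 = 1 ∧ a3 = 1) ∨
    (b0 = 1 ∧ b1 = 0 ∧ b2 = 0 ∧ b3 = 1) ∨
    (b0 = 0 ∧ b1 = 1 ∧ b2 = 0 ∧ b3 = 1) ∨
    (b0 = 0 ∧ b1 = 0 ∧ b2 = 1 ∧ b3 = 1) := by omega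

lemma sq_xyzw_zero (g : R4) (hg : g.IsHomogeneous 2)
    (hxw : coeff (m4 1 0 0 1) g = 0) (hyw : coeff (m4 0 1 0 1) g = 0)
    (hzw : coeff (m4 0 0 1 1) g = 0) :
    coeff (m4 1 1 1 1) (g ^ 2) = 0 := by
  rw [sq, coeff_mul]
  apply Finset.sum_eq_zero
  intro x hx
  rw [Finset.HasAntidiagonal.mem_antidiagonal] at hx
  by_cases h1 : x.1.degree = 2
  · by_cases h2 : x.2.degree = 2
    · have e0 : x.1 0 + x.2 0 = 1 := by have := congrArg (fun f => f 0) hx; simpa using this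
      have e1 : x.1 1 + x.2 1 = 1 := by have := congrArg (fun f => f 1) hx; simpa using this
      have e2 : x.1 2 + x.2 2 = 1 := by have := congrArg (fun f => f 2) hx; simpa using this
      have e3 : x.1 3 + x.2 3 = 1 := by have := congrArg (fun f => f 3) hx; simpa using this
      rw [deg4] at h1 h2
      rcases nat6 _ _ _ _ _ _ _ _ e0 e1 e2 e3 h1 h2 with h | h | h | h | h | h
      · rw [fs_eq x.1 h.1 h.2.1 h.2.2.1 h.2.2.2, hxw, zero_mul]
      · rw [fs_eq x.1 h.1 h.2.1 h.2.2.1 h.2.2.2, hyw, zero_mul]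
      · rw [fs_eq x.1 h.1 h.2.1 h.2.2.1 h.2.2.2, hzw, zero_mul]
      · rw [fs_eq x.2 h.1 h.2.1 h.2.2.1 h.2.2.2, hxw, mul_zero]
      · rw [fs_eq x.2 h.1 h.2.1 h.2.2.1 h.2.2.2, hyw, mul_zero]
      · rw [fs_eq x.2 h.1 h.2.1 h.2.2.1 h.2.2.2, hzw, mul_zero]
    · rw [hg.coeff_eq_zero h2, mul_zero]
  · rw [hg.coeff_eq_zero h1, zero_mul]

end SOSAux

end SOSAux

/-- The Choi–Lam form `Q₁(x,y,z,w) = x²y² + x²z² + y²z² + w⁴ − 4wxyz`. -/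
noncomputable def ChoiLamQ1 : MvPolynomial (Fin 4) ℝ :=
  X 0 ^ 2 * X 1 ^ 2 + X 0 ^ 2 * X 2 ^ 2 + X 1 ^ 2 * X 2 ^ 2 + X 3 ^ 4
    - 4 * (X 3 * X 0 * X 1 * X 2)

namespace SOSAux

lemma f_eq : (X 0 * X 1 + X 0 * X 2 + X 1 * X 2) ^ 2 + X 3 ^ 4 + ChoiLamQ1
    = (monomial (m4 2 2 0 0) 2 + monomial (m4 2 0 2 0) 2 + monomial (m4 0 2 2 0) 2
      + monomial (m4 0 0 0 4) 2 + monomial (m4 2 1 1 0) 2 + monomial (m4 1 2 1 0) 2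
      + monomial (m4 1 1 2 0) 2 + monomial (m4 1 1 1 1) (-4) : R4) := by
  simp only [ChoiLamQ1, mono4, map_ofNat, map_neg]
  ring

end SOSAux

open SOSAux in
/-- The form `f = (xy + xz + yz)² + w⁴ + Q₁(x,y,z,w)` is not a sum of squares of
real quadratic forms in four variables. -/
theorem square_plus_w4_plus_choiLam_not_sos :
    ¬ ∃ (k : ℕ) (g : Fin k → MvPolynomial (Fin 4) ℝ),
      (∀ i, (g i).IsHomogeneous 2) ∧
      (X 0 * X 1 + X 0 * X 2 + X 1 * X 2) ^ 2 + X 3 ^ 4 + ChoiLamQ1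
        = ∑ i, (g i) ^ 2 := by
  rintro ⟨k, g, hg, heq⟩
  rw [f_eq] at heq
  have key : ∀ μ : Fin 4 →₀ ℕ,
      coeff μ (monomial (m4 2 2 0 0) 2 + monomial (m4 2 0 2 0) 2 + monomial (m4 0 2 2 0) 2
        + monomial (m4 0 0 0 4) 2 + monomial (m4 2 1 1 0) 2 + monomial (m4 1 2 1 0) 2
        + monomial (m4 1 1 2 0) 2 + monomial (m4 1 1 1 1) (-4) : R4)
        = ∑ i, coeff μ ((g i) ^ 2) := by
    intro μ
    rw [heq, coeff_sum]
  -- sum-of-squares-is-zero helper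
  have sos0 : ∀ (c : Fin k → ℝ), (0 : ℝ) = ∑ i, (c i) ^ 2 → ∀ i, c i = 0 := by
    intro c h i
    have := (Finset.sum_eq_zero_iff_of_nonneg (fun j _ => sq_nonneg (c j))).mp h.symm
    exact pow_eq_zero_iff (n := 2) (by norm_num) |>.mp (this i (Finset.mem_univ i))
  -- x^4, y^4, z^4 coefficients vanish
  have hA : ∀ i, coeff (m4 2 0 0 0) (g i) = 0 := by
    apply sos0
    have h := key (m4 4 0 0 0)
    simp only [coeff_add, coeff_monomial, m4_inj] at h
    norm_num at h
    rw [h]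
    exact Finset.sum_congr rfl fun i _ => sq_x4 (g i) (hg i)
  have hB : ∀ i, coeff (m4 0 2 0 0) (g i) = 0 := by
    apply sos0
    have h := key (m4 0 4 0 0)
    simp only [coeff_add, coeff_monomial, m4_inj] at h
    norm_num at h
    rw [h]
    exact Finset.sum_congr rfl fun i _ => sq_y4 (g i) (hg i)
  have hC : ∀ i, coeff (m4 0 0 2 0) (g i) = 0 := by
    apply sos0
    have h := key (m4 0 0 4 0)
    simp only [coeff_add, coeff_monomial, m4_inj] at h
    norm_num at h
    rw [h]
    exact Finset.sum_congr rfl fun i _ => sq_z4 (g i) (hg i)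
  -- xw, yw, zw coefficients vanish
  have hXW : ∀ i, coeff (m4 1 0 0 1) (g i) = 0 := by
    apply sos0
    have h := key (m4 2 0 0 2)
    simp only [coeff_add, coeff_monomial, m4_inj] at h
    norm_num at h
    rw [h]
    refine Finset.sum_congr rfl fun i _ => ?_
    rw [sq_xw (g i) (hg i), hA i]
    ring
  have hYW : ∀ i, coeff (m4 0 1 0 1) (g i) = 0 := by
    apply sos0
    have h := key (m4 0 2 0 2)
    simp only [coeff_add, coeff_monomial, m4_inj] at h
    norm_num at h
    rw [h]
    refine Finset.sum_congr rfl fun i _ => ?_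
    rw [sq_yw (g i) (hg i), hB i]
    ring
  have hZW : ∀ i, coeff (m4 0 0 1 1) (g i) = 0 := by
    apply sos0
    have h := key (m4 0 0 2 2)
    simp only [coeff_add, coeff_monomial, m4_inj] at h
    norm_num at h
    rw [h]
    refine Finset.sum_congr rfl fun i _ => ?_
    rw [sq_zw (g i) (hg i), hC i]
    ring
  -- final contradiction at xyzw
  have h := key (m4 1 1 1 1)
  simp only [coeff_add, coeff_monomial, m4_inj] at h
  norm_num at h
  have hz : ∀ i : Fin k, coeff (m4 1 1 1 1) ((g i) ^ 2) = 0 := fun i =>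
    sq_xyzw_zero (g i) (hg i) (hXW i) (hYW i) (hZW i)
  rw [Finset.sum_congr rfl (fun i _ => hz i), Finset.sum_const, smul_zero] at h
  norm_num at h
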